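/- arXiv:1007.4680 — 4 statements merged into one kernel-verified Lean document; each statement's English description precedes it below -/
import Mathlib

section
/- Let i, j, k, r, s, t be nonnegative integers with i + j + k even, i + k ≥ j, j + k ≥ i, i + j ≥ k, and t + (i + j − k)/2 = r + s. Set z = (i + j − k)/2, x = (i + k − j)/2, y = (j + k − i)/2. Then the signed count of oriented arrangements satisfies Arr^{i,j,k}_{r,s,t} = (−1)^{(i+j+k)/2 + r + s} · ∑_{a=0}^{z} (−1)^{a} C(z, a) · C(x, r − a) · C(y, j − s − a), where C(·,·) is the ordinary binomial coefficient (equal to 0 when the lower entry is negative or exceeds the upper). -/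
open Finset

/-- Binomial coefficient `C(n, k)` with an integer lower entry, equal to `0` when the
lower entry is negative (or exceeds the upper entry). -/
def zchoose (n : ℕ) (k : ℤ) : ℤ :=
  if 0 ≤ k then (n.choose k.toNat : ℤ) else 0

/-- An oriented line arrangement for an `(i,j,k)`-triangle with `z` arcs joining side `I`
to side `J`, `x` arcs joining side `I` to side `K` and `y` arcs joining side `J` to side
`K` is an assignment of a direction (a `Bool`) to each arc: for the `z` arcs, `true`
means directed `I → J`; for the `x` arcs, `true` means directed `I → K`; for the `y`
arcs, `true` means directed `J → K`. -/
abbrev OrientedArrangement (z x y : ℕ) : Type :=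
  (Fin z → Bool) × (Fin x → Bool) × (Fin y → Bool)

/-- `Arr z x y r s t` is the sum of the signs `(-1)^N` (where `N` is the number of arcs
directed `I → J`, `K → I` or `K → J`) over all oriented arrangements such that:
`r` arcs point away from side `I`, `s` arcs point away from side `J`, and `t` arcs
point towards side `K`. -/
def Arr (z x y r s t : ℕ) : ℤ :=
  ∑ o : OrientedArrangement z x y,
    if ((univ.filter fun i => o.1 i = true).card
          + (univ.filter fun i => o.2.1 i = true).card = r)
        ∧ ((univ.filter fun i => o.1 i = false).card
          + (univ.filter fun i => o.2.2 i = true).card = s)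
        ∧ ((univ.filter fun i => o.2.1 i = true).card
          + (univ.filter fun i => o.2.2 i = true).card = t) then
      (-1 : ℤ) ^ ((univ.filter fun i => o.1 i = true).card
          + (univ.filter fun i => o.2.1 i = false).card
          + (univ.filter fun i => o.2.2 i = false).card)
    else 0

def boolFinsetEquiv (n : ℕ) : (Fin n → Bool) ≃ Finset (Fin n) where
  toFun f := univ.filter fun i => f i = true
  invFun S i := decide (i ∈ S)
  left_inv f := by funext i; simp
  right_inv S := by ext i; simp

lemma sum_count (n : ℕ) (F : ℕ → ℤ) :
    ∑ f : Fin n → Bool, F ((univ.filter fun i => f i = true).card)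
      = ∑ a ∈ range (n+1), (n.choose a : ℤ) * F a := by
  have h1 : ∑ f : Fin n → Bool, F ((univ.filter fun i => f i = true).card)
      = ∑ S : Finset (Fin n), F S.card :=
    Fintype.sum_equiv (boolFinsetEquiv n) _ _ (fun f => rfl)
  rw [h1, ← Finset.powerset_univ, Finset.sum_powerset]
  rw [Finset.card_univ, Fintype.card_fin]
  refine Finset.sum_congr rfl fun a ha => ?_
  rw [Finset.sum_congr rfl (fun T hT => by
    rw [(Finset.mem_powersetCard.mp hT).2]),
    Finset.sum_const, Finset.card_powersetCard, Finset.card_univ, Fintype.card_fin,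
    nsmul_eq_mul]

lemma key (z x y : ℕ) (F : ℕ → ℕ → ℕ → ℤ) :
    (∑ o : OrientedArrangement z x y,
      F ((univ.filter fun i => o.1 i = true).card)
        ((univ.filter fun i => o.2.1 i = true).card)
        ((univ.filter fun i => o.2.2 i = true).card))
    = ∑ a ∈ range (z+1), ∑ b ∈ range (x+1), ∑ c ∈ range (y+1),
        (z.choose a : ℤ) * (x.choose b : ℤ) * (y.choose c : ℤ) * F a b c := by
  rw [Fintype.sum_prod_type]
  refine (Finset.sum_congr rfl fun f _ => Fintype.sum_prod_type ..).trans ?_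
  refine (sum_count z fun a => ∑ g : Fin x → Bool, ∑ h : Fin y → Bool,
      F a ((univ.filter fun i => g i = true).card) ((univ.filter fun i => h i = true).card)).trans ?_
  refine Finset.sum_congr rfl fun a _ => ?_
  rw [sum_count x fun b => ∑ h : Fin y → Bool, F a b ((univ.filter fun i => h i = true).card),
    Finset.mul_sum]
  refine Finset.sum_congr rfl fun b _ => ?_
  rw [sum_count y fun c => F a b c, Finset.mul_sum, Finset.mul_sum]
  refine Finset.sum_congr rfl fun c _ => ?_
  ring

lemma card_filter_false {n : ℕ} (f : Fin n → Bool) :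
    (univ.filter fun i => f i = false).card = n - (univ.filter fun i => f i = true).card := by
  have := Finset.card_filter_add_card_filter_not
    (s := (univ : Finset (Fin n))) (p := fun i => f i = true)
  simp only [Bool.not_eq_true, Finset.card_univ, Fintype.card_fin] at this
  omega

lemma neg_one_pow_congr_nat {m n : ℕ} (h : m % 2 = n % 2) : (-1 : ℤ)^m = (-1)^n := by
  rcases Nat.even_or_odd m with hm | hm
  · have hm' := Nat.even_iff.mp hm
    rw [hm.neg_one_pow, (Nat.even_iff.mpr (by omega : n % 2 = 0)).neg_one_pow]
  · have hm' := Nat.odd_iff.mp hm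
    rw [hm.neg_one_pow, (Nat.odd_iff.mpr (by omega : n % 2 = 1)).neg_one_pow]

/-- **The classical `3j`-symbol counts signed line arrangements** (Theorem 2.2(i)):
`Arr^{i,j,k}_{r,s,t} = (-1)^{(i+j+k)/2 + r + s} ∑_{a=0}^{z} (-1)^a C(z,a) C(x,r-a) C(y,j-s-a)`
where `z = (i+j-k)/2`, `x = (i+k-j)/2`, `y = (j+k-i)/2`. -/
theorem arr_eq_signed_binomial_sum (i j k r s t : ℕ)
    (heven : Even (i + j + k)) (h1 : j ≤ i + k) (h2 : i ≤ j + k) (h3 : k ≤ i + j)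
    (ht : t + (i + j - k) / 2 = r + s) :
    Arr ((i + j - k) / 2) ((i + k - j) / 2) ((j + k - i) / 2) r s t =
      (-1 : ℤ) ^ ((i + j + k) / 2 + r + s) *
        ∑ a ∈ Finset.range ((i + j - k) / 2 + 1),
          (-1 : ℤ) ^ a * (((i + j - k) / 2).choose a : ℤ) *
            zchoose ((i + k - j) / 2) ((r : ℤ) - a) *
            zchoose ((j + k - i) / 2) ((j : ℤ) - s - a) := by
  have he : (i + j + k) % 2 = 0 := Nat.even_iff.mp heven
  set z := (i + j - k) / 2 with hzdef
  set x := (i + k - j) / 2 with hxdef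
  set y := (j + k - i) / 2 with hydef
  have hj : j = z + y := by omega
  have hX : (i + j + k) / 2 = x + y + z := by omega
  have harr : Arr z x y r s t
      = ∑ o : OrientedArrangement z x y,
          (fun a b c => if a + b = r ∧ (z - a) + c = s ∧ b + c = t then
              (-1 : ℤ) ^ (a + (x - b) + (y - c)) else 0)
            ((univ.filter fun i => o.1 i = true).card)
            ((univ.filter fun i => o.2.1 i = true).card)
            ((univ.filter fun i => o.2.2 i = true).card) := by
    refine Finset.sum_congr rfl fun o _ => ?_
    rw [card_filter_false o.1, card_filter_false o.2.1, card_filter_false o.2.2]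
  rw [harr, key z x y (fun a b c => if a + b = r ∧ (z - a) + c = s ∧ b + c = t then
      (-1 : ℤ) ^ (a + (x - b) + (y - c)) else 0), Finset.mul_sum]
  refine Finset.sum_congr rfl fun a ha => ?_
  simp only [Finset.mem_range] at ha
  have haz : a ≤ z := by omega
  by_cases har : a ≤ r
  · by_cases hzs : z ≤ s + a
    · -- main-ish case: conditions pin b = r - a, c = s + a - z
      have hstep : ∀ b ∈ range (x+1), ∀ c ∈ range (y+1),
          ((z.choose a : ℤ) * (x.choose b : ℤ) * (y.choose c : ℤ) *
            (if a + b = r ∧ (z - a) + c = s ∧ b + c = t then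
              (-1 : ℤ) ^ (a + (x - b) + (y - c)) else 0))
          = (if c = s + a - z then (if b = r - a then
              (z.choose a : ℤ) * (x.choose b : ℤ) * (y.choose c : ℤ) *
                (-1 : ℤ) ^ (a + (x - b) + (y - c)) else 0) else 0) := by
        intro b hb c hc
        simp only [Finset.mem_range] at hb hc
        by_cases hcond : a + b = r ∧ (z - a) + c = s ∧ b + c = t
        · rw [if_pos hcond, if_pos (by omega), if_pos (by omega)]
        · rw [if_neg hcond, mul_zero]
          by_cases hc' : c = s + a - z
          · rw [if_pos hc', if_neg (by omega)]
          · rw [if_neg hc']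
      rw [Finset.sum_congr rfl (fun b hb => Finset.sum_congr rfl (hstep b hb))]
      rw [Finset.sum_congr rfl (fun b _ =>
        Finset.sum_ite_eq' (range (y+1)) (s + a - z) _)]
      by_cases hsy : s + a - z ≤ y
      · rw [Finset.sum_congr rfl (fun b _ => if_pos (Finset.mem_range.mpr (by omega)))]
        rw [Finset.sum_ite_eq' (range (x+1)) (r - a) _]
        by_cases hrx : r - a ≤ x
        · rw [if_pos (Finset.mem_range.mpr (by omega))]
          have hch1 : zchoose x ((r : ℤ) - a) = (x.choose (r - a) : ℤ) := by
            rw [zchoose, if_pos (by omega), show ((r : ℤ) - a).toNat = r - a by omega]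
          have hch2 : zchoose y ((j : ℤ) - s - a) = (y.choose (s + a - z) : ℤ) := by
            rw [zchoose, if_pos (by omega)]
            rw [show ((j : ℤ) - s - a).toNat = y - (s + a - z) by omega]
            rw [Nat.choose_symm hsy]
          rw [hch1, hch2]
          rw [show (-1 : ℤ) ^ (a + (x - (r - a)) + (y - (s + a - z)))
              = (-1 : ℤ) ^ ((i + j + k) / 2 + r + s) * (-1 : ℤ) ^ a by
            rw [← pow_add]
            exact neg_one_pow_congr_nat (by omega)]
          ring
        · rw [if_neg (by simp only [Finset.mem_range]; omega)]
          have : zchoose x ((r : ℤ) - a) = 0 := by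
            rw [zchoose, if_pos (by omega), show ((r:ℤ) - a).toNat = r - a by omega,
              Nat.choose_eq_zero_of_lt (by omega)]
            rfl
          rw [this]
          ring
      · rw [Finset.sum_congr rfl (fun b _ => if_neg (by simp only [Finset.mem_range]; omega)),
          Finset.sum_const, smul_zero]
        have : zchoose y ((j : ℤ) - s - a) = 0 := by
          rw [zchoose, if_neg (by omega)]
        rw [this]
        ring
    · -- z > s + a : condition impossible; and zchoose y (j - s - a) = 0 since j-s-a > y
      rw [Finset.sum_congr rfl (fun b hb => Finset.sum_eq_zero (fun c hc => by
        simp only [Finset.mem_range] at hb hc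
        rw [if_neg (by omega), mul_zero])), Finset.sum_const, smul_zero]
      have : zchoose y ((j : ℤ) - s - a) = 0 := by
        rw [zchoose, if_pos (by omega), Nat.choose_eq_zero_of_lt (by omega)]
        rfl
      rw [this]
      ring
  · -- a > r : condition impossible; zchoose x (r - a) = 0 since r - a < 0
    rw [Finset.sum_congr rfl (fun b hb => Finset.sum_eq_zero (fun c hc => by
      rw [if_neg (by omega), mul_zero])), Finset.sum_const, smul_zero]
    have : zchoose x ((r : ℤ) - a) = 0 := by
      rw [zchoose, if_neg (by omega)]
    rw [this]
    ring
end

section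
/- For all integers r ≥ 0 and n ≥ 0, the alternating sum ∑_{m=1}^{n+1} (−1)^{m+1} · a^{r}_{n+1−m, m} equals (−1)^{n} · C(r + n + 1, n + 1). -/
open Finset

/-- The numbers `a^r_{n,m}` of Lemma 12.4:
`a^r_{n,m} = ∑ ∏_{p=1}^{m} C(r + m + n - d_1 - ⋯ - d_{p-1}, d_p)`, the sum ranging over
all `m`-tuples `(d_1,…,d_m)` of positive integers with `d_1 + ⋯ + d_m = m + n`
(for `m = 0` this gives `1` if `n = 0` and `0` otherwise). -/
def aNum (r n m : ℕ) : ℕ :=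
  ∑ d ∈ (Finset.Nat.antidiagonalTuple m (m + n)).filter (fun d => ∀ p, 1 ≤ d p),
    ∏ p : Fin m,
      Nat.choose (r + m + n - ∑ q ∈ Finset.univ.filter (· < p), d q) (d p)

def bNum (r : ℕ) : ℕ → ℕ → ℕ
  | 0, N => if N = 0 then 1 else 0
  | m + 1, N => ∑ k ∈ Finset.Icc 1 N, (r + N).choose k * bNum r m (N - k)

lemma bNum_eq_zero (r : ℕ) : ∀ m N, N < m → bNum r m N = 0 := by
  intro m
  induction m with
  | zero => omega
  | succ m ih =>
    intro N h
    rw [bNum]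
    apply Finset.sum_eq_zero
    intro k hk
    simp only [Finset.mem_Icc] at hk
    rw [ih _ (by omega), mul_zero]

lemma bNum_one (r N : ℕ) (h : 1 ≤ N) : bNum r 1 N = (r + N).choose N := by
  rw [bNum, Finset.sum_eq_single N]
  · simp [bNum]
  · intro k hk hne
    simp only [Finset.mem_Icc] at hk
    rw [bNum, if_neg (by omega), mul_zero]
  · intro h'
    exact absurd (Finset.mem_Icc.mpr ⟨h, le_refl N⟩) h'

lemma tuple_empty (m M : ℕ) (h : M < m) :
    (Finset.Nat.antidiagonalTuple m M).filter (fun d => ∀ p, 1 ≤ d p) = ∅ := by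
  rw [Finset.filter_eq_empty_iff]
  intro d hd hpos
  rw [Finset.Nat.mem_antidiagonalTuple] at hd
  have hm : (m : ℕ) ≤ ∑ i, d i := by
    calc (m : ℕ) = ∑ _i : Fin m, 1 := by simp
    _ ≤ ∑ i, d i := Finset.sum_le_sum fun i _ => hpos i
  omega

lemma partial_cons (m k : ℕ) (e : Fin m → ℕ) (j : Fin m) :
    ∑ q ∈ Finset.univ.filter (· < j.succ), (Fin.cons k e : Fin (m+1) → ℕ) q
      = k + ∑ q ∈ Finset.univ.filter (· < j), e q := by
  rw [Finset.sum_filter, Finset.sum_filter, Fin.sum_univ_succ]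
  simp [Fin.succ_lt_succ_iff, Fin.succ_pos]

lemma sum_tuple_succ {M : Type*} [AddCommMonoid M] (m N : ℕ) (f : (Fin (m+1) → ℕ) → M) :
    ∑ d ∈ (Finset.Nat.antidiagonalTuple (m+1) N).filter (fun d => ∀ p, 1 ≤ d p), f d
      = ∑ k ∈ Finset.Icc 1 N,
          ∑ e ∈ (Finset.Nat.antidiagonalTuple m (N - k)).filter (fun d => ∀ p, 1 ≤ d p),
            f (Fin.cons k e) := by
  rw [Finset.sum_sigma']
  refine Finset.sum_nbij' (i := fun d => ⟨d 0, Fin.tail d⟩)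
      (j := fun x => Fin.cons x.1 x.2) ?_ ?_ ?_ ?_ ?_
  · intro d hd
    simp only [Finset.mem_filter, Finset.Nat.mem_antidiagonalTuple] at hd
    obtain ⟨hsum, hpos⟩ := hd
    have h0 : d 0 + ∑ i : Fin m, d i.succ = N := by
      rw [← Fin.sum_univ_succ]; exact hsum
    have h1 : d 0 ∈ Finset.Icc 1 N := Finset.mem_Icc.mpr ⟨hpos 0, by omega⟩
    have h2 : Fin.tail d ∈ (Finset.Nat.antidiagonalTuple m (N - d 0)).filter
        (fun d => ∀ p, 1 ≤ d p) := by
      simp only [Finset.mem_filter, Finset.Nat.mem_antidiagonalTuple]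
      exact ⟨by simp only [Fin.tail]; omega, fun p => hpos p.succ⟩
    exact Finset.mem_sigma.mpr ⟨h1, h2⟩
  · rintro ⟨k, e⟩ hx
    simp only [Finset.mem_sigma, Finset.mem_Icc, Finset.mem_filter,
      Finset.Nat.mem_antidiagonalTuple] at hx
    obtain ⟨⟨hk1, hkN⟩, hsum, hpos⟩ := hx
    simp only [Finset.mem_filter, Finset.Nat.mem_antidiagonalTuple]
    constructor
    · rw [Fin.sum_univ_succ]
      simp only [Fin.cons_zero, Fin.cons_succ]
      omega
    · intro p
      refine Fin.cases ?_ ?_ p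
      · simpa using hk1
      · intro i; simpa using hpos i
  · intro d _; exact Fin.cons_self_tail d
  · rintro ⟨k, e⟩ _; simp
  · intro d _; rw [Fin.cons_self_tail]

lemma prod_cons_choose (m t k : ℕ) (e : Fin m → ℕ) :
    (∏ p : Fin (m+1),
        Nat.choose (t - ∑ q ∈ Finset.univ.filter (· < p), (Fin.cons k e : Fin (m+1) → ℕ) q)
          ((Fin.cons k e : Fin (m+1) → ℕ) p))
      = t.choose k * ∏ p : Fin m,
          Nat.choose (t - k - ∑ q ∈ Finset.univ.filter (· < p), e q) (e p) := by
  rw [Fin.prod_univ_succ]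
  congr 1
  · have h0 : (Finset.univ.filter (· < (0 : Fin (m+1)))) = ∅ := by
      apply Finset.filter_eq_empty_iff.mpr
      intro q _
      exact Fin.not_lt_zero q
    simp [h0]
  · apply Finset.prod_congr rfl
    intro p _
    rw [partial_cons, Fin.cons_succ, Nat.sub_add_eq]

lemma aNum_eq_bNum (r : ℕ) : ∀ m n, aNum r n m = bNum r m (m + n) := by
  intro m
  induction m with
  | zero =>
    intro n
    cases n with
    | zero =>
      rw [aNum, bNum]
      simp [Finset.Nat.antidiagonalTuple_zero_zero]
    | succ n =>
      rw [aNum, bNum]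
      simp [Finset.Nat.antidiagonalTuple_zero_succ]
  | succ m ih =>
    intro n
    rw [aNum, sum_tuple_succ, bNum]
    apply Finset.sum_congr rfl
    intro k hk
    simp only [Finset.mem_Icc] at hk
    simp only [prod_cons_choose]
    rw [← Finset.mul_sum]
    have ht : r + (m + 1) + n = r + (m + 1 + n) := by omega
    by_cases h : k ≤ n + 1
    · have h1 : m + (n + 1 - k) = m + 1 + n - k := by omega
      have h2 : r + m + (n + 1 - k) = r + (m + 1) + n - k := by omega
      have ha : aNum r (n + 1 - k) m
          = ∑ e ∈ (Finset.Nat.antidiagonalTuple m (m + 1 + n - k)).filter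
              (fun d => ∀ p, 1 ≤ d p),
            ∏ p : Fin m,
              Nat.choose (r + (m + 1) + n - k - ∑ q ∈ Finset.univ.filter (· < p), e q) (e p) := by
        rw [aNum, h1, h2]
      rw [← ha, ih, h1, ht]
    · rw [tuple_empty m _ (by omega), bNum_eq_zero r m _ (by omega)]
      simp

def sAlt (r N : ℕ) : ℤ := ∑ m ∈ Finset.Icc 1 N, (-1) ^ (m + 1) * (bNum r m N : ℤ)

lemma sAlt_zero (r : ℕ) : sAlt r 0 = 0 := by simp [sAlt]

lemma sAlt_range (r N : ℕ) :
    sAlt r N = ∑ i ∈ Finset.range N, (-1) ^ i * (bNum r (i + 1) N : ℤ) := by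
  rw [sAlt, ← Finset.Ico_add_one_right_eq_Icc, Finset.sum_Ico_eq_sum_range]
  apply Finset.sum_congr rfl
  intro i _
  have h1 : 1 + i = i + 1 := by omega
  have h2 : (-1 : ℤ) ^ (i + 1 + 1) = (-1) ^ i := by
    rw [pow_succ, pow_succ]
    ring
  rw [h1, h2]

lemma inner_eq (r M k : ℕ) (hk : 1 ≤ k) :
    ∑ i ∈ Finset.range M, (-1 : ℤ) ^ i * (bNum r (i + 1) (M + 1 - k) : ℤ)
      = sAlt r (M + 1 - k) := by
  rw [sAlt_range]
  apply (Finset.sum_subset ?_ ?_).symm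
  · exact Finset.range_subset_range.mpr (by omega)
  · intro i hi hni
    simp only [Finset.mem_range] at hi hni
    rw [bNum_eq_zero r _ _ (by omega)]
    simp

lemma sAlt_eq (r : ℕ) : ∀ N, 1 ≤ N → sAlt r N = (-1) ^ (N - 1) * ((r + N).choose N : ℤ) := by
  intro N
  induction N using Nat.strong_induction_on with
  | _ N IH =>
  intro hN
  obtain ⟨M, rfl⟩ : ∃ M, N = M + 1 := ⟨N - 1, by omega⟩
  rw [sAlt_range, Finset.sum_range_succ']
  simp only [pow_zero, one_mul, zero_add, Nat.add_sub_cancel]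
  rw [bNum_one r (M + 1) (by omega)]
  have hstep : ∀ i : ℕ, ((bNum r (i + 1 + 1) (M + 1) : ℤ))
      = ∑ k ∈ Finset.Icc 1 (M + 1),
          (((r + (M + 1)).choose k : ℤ)) * (bNum r (i + 1) (M + 1 - k) : ℤ) := by
    intro i
    rw [bNum]
    push_cast
    rfl
  have hmain : (∑ i ∈ Finset.range M, (-1 : ℤ) ^ (i + 1) * (bNum r (i + 1 + 1) (M + 1) : ℤ))
      = -∑ k ∈ Finset.Icc 1 (M + 1),
          (((r + (M + 1)).choose k : ℤ)) * sAlt r (M + 1 - k) := by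
    calc ∑ i ∈ Finset.range M, (-1 : ℤ) ^ (i + 1) * (bNum r (i + 1 + 1) (M + 1) : ℤ)
        = ∑ i ∈ Finset.range M, ∑ k ∈ Finset.Icc 1 (M + 1),
            -((-1 : ℤ) ^ i * (((r + (M + 1)).choose k : ℤ) * (bNum r (i + 1) (M + 1 - k) : ℤ))) := by
          apply Finset.sum_congr rfl
          intro i _
          rw [hstep i, Finset.mul_sum]
          apply Finset.sum_congr rfl
          intro k _
          ring
      _ = ∑ k ∈ Finset.Icc 1 (M + 1), ∑ i ∈ Finset.range M,
            -((-1 : ℤ) ^ i * (((r + (M + 1)).choose k : ℤ) * (bNum r (i + 1) (M + 1 - k) : ℤ))) :=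
          Finset.sum_comm
      _ = -∑ k ∈ Finset.Icc 1 (M + 1),
            (((r + (M + 1)).choose k : ℤ)) * sAlt r (M + 1 - k) := by
          rw [← Finset.sum_neg_distrib]
          apply Finset.sum_congr rfl
          intro k hk
          simp only [Finset.mem_Icc] at hk
          rw [← inner_eq r M k hk.1, Finset.mul_sum, ← Finset.sum_neg_distrib]
          apply Finset.sum_congr rfl
          intro i _
          ring
  rw [hmain]
  rw [Finset.sum_Icc_succ_top (by omega : 1 ≤ M + 1), Nat.sub_self, sAlt_zero, mul_zero, add_zero]
  have hterm : ∀ k ∈ Finset.Icc 1 M,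
      (((r + (M + 1)).choose k : ℤ)) * sAlt r (M + 1 - k)
        = (((r + (M + 1)).choose (M + 1) : ℤ) * (-1) ^ M) * ((-1) ^ k * ((M + 1).choose k : ℤ)) := by
    intro k hk
    simp only [Finset.mem_Icc] at hk
    rw [IH (M + 1 - k) (by omega) (by omega)]
    have e1 : M + 1 - k - 1 = M - k := by omega
    have e2 : (-1 : ℤ) ^ (M - k) = (-1) ^ M * (-1) ^ k := by
      have hx : (-1 : ℤ) ^ (M - k) * (-1) ^ k = (-1) ^ M := by
        rw [← pow_add]
        congr 1
        omega
      have hy : (-1 : ℤ) ^ k * (-1) ^ k = 1 := by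
        rw [← pow_add, ← two_mul, pow_mul]
        norm_num
      calc (-1 : ℤ) ^ (M - k) = (-1) ^ (M - k) * ((-1) ^ k * (-1) ^ k) := by rw [hy, mul_one]
        _ = ((-1) ^ (M - k) * (-1) ^ k) * (-1) ^ k := by ring
        _ = (-1) ^ M * (-1) ^ k := by rw [hx]
    have e3 : (r + (M + 1)).choose k * (r + (M + 1 - k)).choose (M + 1 - k)
        = (r + (M + 1)).choose (M + 1) * (M + 1).choose k := by
      have h3 := Nat.choose_mul (n := r + (M + 1)) (k := M + 1) (s := k)
        (by omega)
      rw [show r + (M + 1) - k = r + (M + 1 - k) by omega] at h3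
      exact h3.symm
    have e3' : (((r + (M + 1)).choose k : ℤ)) * ((r + (M + 1 - k)).choose (M + 1 - k) : ℤ)
        = ((r + (M + 1)).choose (M + 1) : ℤ) * ((M + 1).choose k : ℤ) := by
      exact_mod_cast congrArg (Nat.cast : ℕ → ℤ) e3
    rw [e1, e2]
    linear_combination ((-1 : ℤ) ^ M * (-1) ^ k) * e3'
  rw [Finset.sum_congr rfl hterm, ← Finset.mul_sum]
  have hbin : ∑ k ∈ Finset.Icc 1 M, (-1 : ℤ) ^ k * ((M + 1).choose k : ℤ)
      = -1 - (-1) ^ (M + 1) := by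
    have h := Int.alternating_sum_range_choose (n := M + 1)
    rw [if_neg (Nat.succ_ne_zero M), Finset.sum_range_succ, Finset.sum_range_succ'] at h
    simp only [pow_zero, one_mul, Nat.choose_zero_right, Nat.choose_self, Nat.cast_one,
      mul_one] at h
    rw [← Finset.Ico_add_one_right_eq_Icc, Finset.sum_Ico_eq_sum_range]
    have : ∀ i ∈ Finset.range (M + 1 - 1), (-1 : ℤ) ^ (1 + i) * ((M + 1).choose (1 + i) : ℤ)
        = (-1) ^ (i + 1) * ((M + 1).choose (i + 1) : ℤ) := by
      intro i _
      rw [Nat.add_comm 1 i]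
    rw [Finset.sum_congr rfl this, show M + 1 - 1 = M from rfl]
    linarith [h]
  rw [hbin]
  have hMM : (-1 : ℤ) ^ M * (-1) ^ M = 1 := by
    rw [← pow_add, ← two_mul, pow_mul]
    norm_num
  linear_combination (-((r + (M + 1)).choose (M + 1) : ℤ)) * hMM

/-- **Lemma 12.4(1)**: the alternating sum
`∑_{m=1}^{n+1} (-1)^{m+1} a^r_{n+1-m,m}` equals `(-1)^n C(r+n+1, n+1)`. -/
theorem aNum_alternating_sum (r n : ℕ) :
    ∑ m ∈ Finset.Icc 1 (n + 1), (-1 : ℤ) ^ (m + 1) * (aNum r (n + 1 - m) m : ℤ) =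
      (-1 : ℤ) ^ n * ((r + n + 1).choose (n + 1) : ℤ) := by
  have h1 : ∀ m ∈ Finset.Icc 1 (n + 1),
      (-1 : ℤ) ^ (m + 1) * (aNum r (n + 1 - m) m : ℤ)
        = (-1) ^ (m + 1) * (bNum r m (n + 1) : ℤ) := by
    intro m hm
    simp only [Finset.mem_Icc] at hm
    rw [aNum_eq_bNum, show m + (n + 1 - m) = n + 1 by omega]
  rw [Finset.sum_congr rfl h1]
  have h2 := sAlt_eq r (n + 1) (by omega)
  rw [sAlt] at h2
  rw [h2, show n + 1 - 1 = n from rfl, show r + (n + 1) = r + n + 1 by omega]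
end

section
/- For all integers r ≥ 0, n ≥ 0 and m ≥ 1, the numbers a satisfy the recursion a^{r}_{n,m} = ∑_{γ=0}^{n} C(r + γ + 1, γ + 1) · a^{r+γ+1}_{n−γ, m−1}. -/
open Finset

lemma sum_filter_lt_castSucc {k : ℕ} (d : Fin (k + 1) → ℕ) (p : Fin k) :
    ∑ q ∈ Finset.univ.filter (· < p.castSucc), d q
      = ∑ q ∈ Finset.univ.filter (· < p), d q.castSucc := by
  rw [Finset.sum_filter, Finset.sum_filter, Fin.sum_univ_castSucc]
  have h : ¬ (Fin.last k < p.castSucc) := not_lt.mpr (Fin.castSucc_lt_last p).le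
  simp [Fin.castSucc_lt_castSucc_iff, h]

lemma sum_filter_lt_last {k : ℕ} (d : Fin (k + 1) → ℕ) :
    ∑ q ∈ Finset.univ.filter (· < Fin.last k), d q = ∑ q : Fin k, d q.castSucc := by
  rw [Finset.sum_filter, Fin.sum_univ_castSucc]
  simp [Fin.castSucc_lt_last]

/-- **Lemma 12.5**: the recursion
`a^r_{n,m} = ∑_{γ=0}^{n} C(r+γ+1, γ+1) a^{r+γ+1}_{n-γ, m-1}` for `m ≥ 1`. -/
theorem aNum_recursion (r n m : ℕ) (hm : 1 ≤ m) :
    aNum r n m =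
      ∑ γ ∈ Finset.range (n + 1),
        (r + γ + 1).choose (γ + 1) * aNum (r + γ + 1) (n - γ) (m - 1) := by
  obtain ⟨k, rfl⟩ : ∃ k, m = k + 1 := ⟨m - 1, by omega⟩
  simp only [Nat.add_sub_cancel, aNum, Finset.mul_sum]
  rw [Finset.sum_sigma']
  refine Finset.sum_bij' (fun d _ => ⟨d (Fin.last k) - 1, Fin.init d⟩)
    (fun x _ => Fin.snoc x.2 (x.1 + 1)) ?_ ?_ ?_ ?_ ?_
  · rintro d hd
    rw [Finset.mem_filter, Finset.Nat.mem_antidiagonalTuple] at hd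
    obtain ⟨hsum, hpos⟩ := hd
    rw [Fin.sum_univ_castSucc] at hsum
    have hk : k ≤ ∑ q : Fin k, d q.castSucc := by
      calc k = ∑ _q : Fin k, 1 := by simp
        _ ≤ _ := Finset.sum_le_sum fun q _ => hpos q.castSucc
    have hlast := hpos (Fin.last k)
    rw [Finset.mem_sigma, Finset.mem_range, Finset.mem_filter,
      Finset.Nat.mem_antidiagonalTuple]
    refine ⟨by show d (Fin.last k) - 1 < n + 1; omega, ?_, fun p => hpos p.castSucc⟩
    show ∑ q : Fin k, Fin.init d q = k + (n - (d (Fin.last k) - 1))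
    have : ∑ q : Fin k, Fin.init d q = ∑ q : Fin k, d q.castSucc :=
      Finset.sum_congr rfl fun q _ => rfl
    rw [this]
    omega
  · rintro ⟨γ, e⟩ hx
    dsimp only
    rw [Finset.mem_sigma, Finset.mem_range, Finset.mem_filter,
      Finset.Nat.mem_antidiagonalTuple] at hx
    obtain ⟨hγ', hsum', hpos'⟩ := hx
    have hγ : γ < n + 1 := hγ'
    have hsum : ∑ i : Fin k, e i = k + (n - γ) := hsum'
    have hpos : ∀ p : Fin k, 1 ≤ e p := hpos'
    rw [Finset.mem_filter, Finset.Nat.mem_antidiagonalTuple]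
    constructor
    · rw [Fin.sum_univ_castSucc]
      simp only [Fin.snoc_castSucc, Fin.snoc_last]
      omega
    · intro p
      refine Fin.lastCases ?_ ?_ p
      · simp
      · intro q; simpa using hpos q
  · intro d hd
    rw [Finset.mem_filter] at hd
    have h1 := hd.2 (Fin.last k)
    dsimp only
    rw [Nat.sub_add_cancel h1, Fin.snoc_init_self]
  · rintro ⟨γ, e⟩ _
    dsimp only
    simp [Fin.init_snoc]
  · intro d hd
    dsimp only
    rw [Finset.mem_filter, Finset.Nat.mem_antidiagonalTuple] at hd
    obtain ⟨hsum, hpos⟩ := hd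
    rw [Fin.sum_univ_castSucc] at hsum
    have hk : k ≤ ∑ q : Fin k, d q.castSucc := by
      calc k = ∑ _q : Fin k, 1 := by simp
        _ ≤ _ := Finset.sum_le_sum fun q _ => hpos q.castSucc
    have hlast := hpos (Fin.last k)
    set γ := d (Fin.last k) - 1 with hγdef
    have hγ : γ ≤ n := by omega
    rw [Fin.prod_univ_castSucc]
    rw [mul_comm]
    congr 1
    · -- last factor
      rw [sum_filter_lt_last]
      have : r + (k + 1) + n - ∑ q : Fin k, d q.castSucc = r + γ + 1 := by omega
      rw [this]
      congr 1
      omega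
    · refine Finset.prod_congr rfl fun p _ => ?_
      rw [sum_filter_lt_castSucc]
      have hle : ∑ q ∈ Finset.univ.filter (· < p), d q.castSucc
          ≤ ∑ q : Fin k, d q.castSucc := Finset.sum_le_sum_of_subset (by simp)
      have htop : r + (k + 1) + n - ∑ q ∈ Finset.univ.filter (· < p), d q.castSucc
          = r + γ + 1 + k + (n - γ) - ∑ q ∈ Finset.univ.filter (· < p), Fin.init d q := by
        have : ∑ q ∈ Finset.univ.filter (· < p), Fin.init d q
            = ∑ q ∈ Finset.univ.filter (· < p), d q.castSucc :=
          Finset.sum_congr rfl fun q _ => rfl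
        rw [this]
        omega
      rw [htop]
      rfl
end

section
/- For all integers r ≥ 0, n ≥ 0 and 1 ≤ m ≤ n + 1, one has a^{r}_{n+1−m, m} = C(r + n + 1, n + 1) · ∑ (n+1)!/(d_1! ⋯ d_m!), where the sum ranges over all m-tuples (d_1, …, d_m) of positive integers with d_1 + ⋯ + d_m = n + 1. -/
open Finset

lemma partialSum_succ {m : ℕ} (d : Fin (m + 1) → ℕ) (i : Fin m) :
    ∑ q ∈ Finset.univ.filter (· < i.succ), d q =
      d 0 + ∑ q ∈ Finset.univ.filter (· < i), d q.succ := by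
  rw [Finset.sum_filter, Finset.sum_filter, Fin.sum_univ_succ]
  simp [Fin.succ_lt_succ_iff, Fin.succ_pos]

lemma key_s11 (m : ℕ) : ∀ (N : ℕ) (d : Fin m → ℕ), (∑ p, d p) ≤ N →
    (∏ p, Nat.choose (N - ∑ q ∈ Finset.univ.filter (· < p), d q) (d p)) *
      ((∏ p, (d p).factorial) * (N - ∑ p, d p).factorial) = N.factorial := by
  induction m with
  | zero => intro N d h; simp
  | succ m ih =>
    intro N d h
    rw [Fin.sum_univ_succ] at h
    have hd0 : d 0 ≤ N := le_trans (Nat.le_add_right _ _) h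
    have hs' : (∑ i : Fin m, d i.succ) ≤ N - d 0 := Nat.le_sub_of_add_le (by omega)
    have H := ih (N - d 0) (fun i => d i.succ) hs'
    beta_reduce at H
    have h0 : (Finset.univ.filter (· < (0 : Fin (m + 1)))) = ∅ := by
      ext q; simp [Fin.not_lt_zero]
    rw [Fin.prod_univ_succ, Fin.prod_univ_succ, Fin.sum_univ_succ, h0]
    simp only [Finset.sum_empty, Nat.sub_zero]
    have hrw : ∀ i : Fin m,
        N - ∑ q ∈ Finset.univ.filter (· < i.succ), d q =
          N - d 0 - ∑ q ∈ Finset.univ.filter (· < i), d q.succ := by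
      intro i; rw [partialSum_succ, Nat.sub_sub]
    rw [Finset.prod_congr rfl (fun i _ => by rw [hrw i]), ← Nat.sub_sub,
      ← Nat.choose_mul_factorial_mul_factorial hd0, ← H]
    ring

lemma prod_eq (m N : ℕ) (d : Fin m → ℕ) (h : (∑ p, d p) ≤ N) :
    (∏ p, Nat.choose (N - ∑ q ∈ Finset.univ.filter (· < p), d q) (d p)) =
      N.choose (∑ p, d p) * Nat.multinomial Finset.univ d := by
  have hk := key_s11 m N d h
  have hspec := Nat.multinomial_spec Finset.univ d
  have hpos : 0 < (∏ p, (d p).factorial) * (N - ∑ p, d p).factorial :=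
    Nat.mul_pos (Finset.prod_pos fun _ _ => Nat.factorial_pos _) (Nat.factorial_pos _)
  apply Nat.eq_of_mul_eq_mul_right hpos
  rw [hk]
  calc N.factorial
      = N.choose (∑ p, d p) * (∑ p, d p).factorial * (N - ∑ p, d p).factorial :=
        (Nat.choose_mul_factorial_mul_factorial h).symm
    _ = N.choose (∑ p, d p) * ((∏ p, (d p).factorial) * Nat.multinomial Finset.univ d) *
          (N - ∑ p, d p).factorial := by rw [hspec]
    _ = N.choose (∑ p, d p) * Nat.multinomial Finset.univ d *
          ((∏ p, (d p).factorial) * (N - ∑ p, d p).factorial) := by ring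

/-- **Equation (12.2)**: for `1 ≤ m ≤ n + 1`,
`a^r_{n+1-m, m} = C(r+n+1, n+1) ∑ (n+1)!/(d_1! ⋯ d_m!)`, the sum ranging over all
`m`-tuples `(d_1,…,d_m)` of positive integers with `d_1 + ⋯ + d_m = n + 1`
(the multinomial coefficient `(n+1)!/(d_1!⋯d_m!)` is `Nat.multinomial`). -/
theorem aNum_eq_choose_mul_multinomial_sum (r n m : ℕ) (hm1 : 1 ≤ m) (hm2 : m ≤ n + 1) :
    aNum r (n + 1 - m) m =
      (r + n + 1).choose (n + 1) *
        ∑ d ∈ (Finset.Nat.antidiagonalTuple m (n + 1)).filter (fun d => ∀ p, 1 ≤ d p),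
          Nat.multinomial Finset.univ d := by
  have hmn : m + (n + 1 - m) = n + 1 := by omega
  have hrmn : r + m + (n + 1 - m) = r + n + 1 := by omega
  rw [aNum, hmn, hrmn, Finset.mul_sum]
  refine Finset.sum_congr rfl fun d hd => ?_
  rw [Finset.mem_filter, Finset.Nat.mem_antidiagonalTuple] at hd
  rw [prod_eq m (r + n + 1) d (by rw [hd.1]; omega), hd.1]
end
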